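/- Fix an integer N ≥ 2, and for each P > 0 let φ(P) ∈ [1,N] be the unique solution of (1+NPφ)^{N-1} = (1+Pφ(N-φ))^N. Then φ(P) → N as P → ∞. -/
import Mathlib


theorem stmt_7 (N : ℕ) (hN : 2 ≤ N) (φ : ℝ → ℝ)
    (hsol : ∀ P : ℝ, 0 < P → φ P ∈ Set.Icc 1 (N : ℝ) ∧
      (1 + (N : ℝ) * P * φ P) ^ (N - 1) = (1 + P * φ P * ((N : ℝ) - φ P)) ^ N)
    (huniq : ∀ P : ℝ, 0 < P → ∀ ψ : ℝ, ψ ∈ Set.Icc 1 (N : ℝ) →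
      (1 + (N : ℝ) * P * ψ) ^ (N - 1) = (1 + P * ψ * ((N : ℝ) - ψ)) ^ N → ψ = φ P) :
    Filter.Tendsto φ Filter.atTop (nhds (N : ℝ)) := by
  rw [Metric.tendsto_nhds]
  intro ε hε
  rw [Filter.eventually_atTop]
  set C : ℝ := (1 + (N : ℝ) ^ 2) ^ (N - 1) with hC
  have hCpos : 0 < C := by positivity
  refine ⟨max 1 (C / ε ^ N + 1), fun P hP => ?_⟩
  have hP1 : (1 : ℝ) ≤ P := le_trans (le_max_left _ _) hP
  have hPpos : (0 : ℝ) < P := lt_of_lt_of_le one_pos hP1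
  have hP2 : C / ε ^ N < P := lt_of_lt_of_le (lt_add_one _) (le_trans (le_max_right _ _) hP)
  obtain ⟨⟨hφ1, hφN⟩, heq⟩ := hsol P hPpos
  set a := (N : ℝ) - φ P with ha
  have ha0 : 0 ≤ a := sub_nonneg.2 hφN
  have h1 : (P * a) ^ N ≤ (1 + P * φ P * a) ^ N := by
    apply pow_le_pow_left₀ (by positivity)
    nlinarith [mul_nonneg hPpos.le ha0]
  have h2 : (1 + (N : ℝ) * P * φ P) ^ (N - 1) ≤ ((1 + (N : ℝ) ^ 2) * P) ^ (N - 1) := by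
    apply pow_le_pow_left₀ (by positivity)
    have hN0 : (0 : ℝ) ≤ (N : ℝ) := Nat.cast_nonneg N
    nlinarith [mul_nonneg hN0 hPpos.le]
  have h3 : (P * a) ^ N ≤ C * P ^ (N - 1) := by
    calc (P * a) ^ N ≤ (1 + P * φ P * a) ^ N := h1
      _ = (1 + (N : ℝ) * P * φ P) ^ (N - 1) := heq.symm
      _ ≤ ((1 + (N : ℝ) ^ 2) * P) ^ (N - 1) := h2
      _ = C * P ^ (N - 1) := by rw [mul_pow]
  have hPsplit : P ^ N = P * P ^ (N - 1) := by
    conv_lhs => rw [show N = 1 + (N - 1) by omega]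
    rw [pow_add, pow_one]
  have h4 : a ^ N * P ≤ C := by
    have h5 : (a ^ N * P) * P ^ (N - 1) ≤ C * P ^ (N - 1) := by
      calc (a ^ N * P) * P ^ (N - 1) = (P * a) ^ N := by rw [mul_pow, hPsplit]; ring
        _ ≤ C * P ^ (N - 1) := h3
    exact le_of_mul_le_mul_right h5 (by positivity)
  have h6 : C < ε ^ N * P := by
    have := (div_lt_iff₀ (by positivity : (0 : ℝ) < ε ^ N)).mp hP2
    linarith
  have h7 : a ^ N < ε ^ N :=
    lt_of_mul_lt_mul_right (lt_of_le_of_lt h4 h6) hPpos.le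
  have h8 : a < ε := lt_of_pow_lt_pow_left₀ N hε.le h7
  rw [Real.dist_eq, abs_lt]
  constructor <;> [linarith; linarith]
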